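/- For all integers n, L, k with n ≥ k ≥ 1 and L ≥ 0, E_{L,k}(Y) = 2^{−n} · ∑_{m=0}^{n} C(n,m) · (1 + ω_{n,m,k}/C(n,k))^L, as an equality of real numbers. -/

import Mathlib

open Finset Filter

attribute [local instance] Classical.propDecidable

/-- `M_{L,n,k}`: the set of `L × n` matrices over `ZMod 2` with exactly `k`
nonzero entries in each row. -/
noncomputable def Mset (L n k : ℕ) : Finset (Matrix (Fin L) (Fin n) (ZMod 2)) :=
  Finset.univ.filter fun A =>
    ∀ i : Fin L, (Finset.univ.filter fun j : Fin n => A i j ≠ 0).card = k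

/-- `Y(A)`: the number of vectors in the kernel of the transpose of `A`. -/
noncomputable def Ycount {L n : ℕ} (A : Matrix (Fin L) (Fin n) (ZMod 2)) : ℕ :=
  Nat.card {u : Fin L → ZMod 2 // Matrix.vecMul u A = 0}

/-- `E_{L,k}(Y)`: the expectation of `Y` over a uniformly random `A ∈ M_{L,n,k}`
(there are `C(n,k)^L` such matrices). -/
noncomputable def EY (n L k : ℕ) : ℝ :=
  (∑ A ∈ Mset L n k, (Ycount A : ℝ)) / (n.choose k : ℝ) ^ L

/-- `P_(r)`: the fraction of matrices in `M_{L,n,k}` of rank `r`. -/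
noncomputable def Prank (n L k r : ℕ) : ℝ :=
  (((Mset L n k).filter fun A => A.rank = r).card : ℝ) / (n.choose k : ℝ) ^ L

/-- `ω_{n,m,k} = ∑_{s=0}^{k} (−1)^s C(m,s) C(n−m,k−s)`. -/
def omegaW (n m k : ℕ) : ℤ :=
  ∑ s ∈ Finset.range (k + 1), (-1 : ℤ) ^ s * (m.choose s : ℤ) * ((n - m).choose (k - s) : ℤ)

noncomputable def sgn (a : ZMod 2) : ℝ := if a = 0 then 1 else -1
lemma sgn_zero : sgn 0 = 1 := by simp [sgn]
lemma sgn_add (a b : ZMod 2) : sgn (a + b) = sgn a * sgn b := by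
  have h : ∀ c : ZMod 2, c = 0 ∨ c = 1 := by decide
  have h2 : (1 + 1 : ZMod 2) = 0 := by decide
  rcases h a with ha | ha <;> rcases h b with hb | hb <;>
    subst ha <;> subst hb <;> simp [sgn, h2]
lemma sgn_sum {ι : Type*} (s : Finset ι) (f : ι → ZMod 2) :
    sgn (∑ i ∈ s, f i) = ∏ i ∈ s, sgn (f i) := by
  classical
  induction s using Finset.cons_induction with
  | empty => simp [sgn_zero]
  | cons a s ha ih => rw [Finset.sum_cons, Finset.prod_cons, sgn_add, ih]
lemma sgn_natCast (c : ℕ) : sgn (c : ZMod 2) = (-1 : ℝ) ^ c := by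
  induction c with
  | zero => simp [sgn_zero]
  | succ m ih => push_cast; rw [sgn_add, ih, pow_succ]; norm_num [sgn]

noncomputable def supp {n : ℕ} (r : Fin n → ZMod 2) : Finset (Fin n) :=
  Finset.univ.filter fun j => r j ≠ 0

lemma supp_indicator {n : ℕ} (T : Finset (Fin n)) :
    supp (fun a => if a ∈ T then (1 : ZMod 2) else 0) = T := by
  ext a; by_cases h : a ∈ T <;> simp [supp, h]

lemma indicator_supp {n : ℕ} (r : Fin n → ZMod 2) :
    (fun a => if a ∈ supp r then (1 : ZMod 2) else 0) = r := by
  funext a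
  have h : ∀ c : ZMod 2, c = 0 ∨ c = 1 := by decide
  rcases h (r a) with h1 | h1 <;> simp [supp, h1]

lemma sum_supp_eq {n j : ℕ} {M : Type*} [AddCommMonoid M] (f : Finset (Fin n) → M) :
    ∑ r ∈ Finset.univ.filter (fun r : Fin n → ZMod 2 => (supp r).card = j), f (supp r)
      = ∑ T ∈ powersetCard j (Finset.univ : Finset (Fin n)), f T := by
  refine Finset.sum_nbij' (i := fun r => supp r)
    (j := fun T a => if a ∈ T then (1 : ZMod 2) else 0) ?_ ?_ ?_ ?_ ?_
  · intro r hr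
    simp only [mem_filter] at hr
    simp [mem_powersetCard, hr.2]
  · intro T hT
    simp only [mem_powersetCard] at hT
    simp [supp_indicator, hT.2]
  · intro r _; exact indicator_supp r
  · intro T _; exact supp_indicator T
  · intro r _; rfl

lemma card_weight {n j : ℕ} :
    (Finset.univ.filter (fun r : Fin n → ZMod 2 => (supp r).card = j)).card = n.choose j := by
  have h := sum_supp_eq (n := n) (j := j) (M := ℕ) (fun _ => 1)
  rw [Finset.sum_const, Finset.sum_const, smul_eq_mul, smul_eq_mul, mul_one, mul_one] at h
  rw [h, Finset.card_powersetCard, Finset.card_univ, Fintype.card_fin]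

lemma sum_sgn_dot {n : ℕ} (v : Fin n → ZMod 2) :
    ∑ x : Fin n → ZMod 2, sgn (∑ j, v j * x j)
      = if v = 0 then (2 : ℝ) ^ n else 0 := by
  have huniv : (Finset.univ : Finset (ZMod 2)) = {0, 1} := by decide
  have hstep : ∀ x : Fin n → ZMod 2, sgn (∑ j, v j * x j) = ∏ j, sgn (v j * x j) :=
    fun x => sgn_sum _ _
  simp_rw [hstep]
  rw [← Fintype.piFinset_univ]
  rw [Finset.sum_prod_piFinset (Finset.univ : Finset (ZMod 2)) (fun j c => sgn (v j * c))]
  have hc : ∀ j, ∑ c : ZMod 2, sgn (v j * c) = if v j = 0 then (2:ℝ) else 0 := by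
    intro j
    rw [huniv, Finset.sum_insert (by decide), Finset.sum_singleton]
    have h : v j = 0 ∨ v j = 1 := by
      have h' : ∀ c : ZMod 2, c = 0 ∨ c = 1 := by decide
      exact h' _
    rcases h with h1 | h1 <;> rw [h1] <;> norm_num [sgn]
  simp_rw [hc]
  by_cases hv : v = 0
  · subst hv
    simp
  · have : ∃ j, v j ≠ 0 := by
      by_contra hcon
      push_neg at hcon
      exact hv (funext hcon)
    obtain ⟨j, hj⟩ := this
    rw [if_neg hv]
    exact Finset.prod_eq_zero (Finset.mem_univ j) (by simp [hj])

lemma card_inter_fiber {n : ℕ} (S : Finset (Fin n)) (k s : ℕ) (hs : s ≤ k) :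
    ((powersetCard k (Finset.univ : Finset (Fin n))).filter
        fun T => (T ∩ S).card = s).card
      = S.card.choose s * (n - S.card).choose (k - s) := by
  have key : ((powersetCard k (Finset.univ : Finset (Fin n))).filter
        fun T => (T ∩ S).card = s).card
      = ((powersetCard s S) ×ˢ (powersetCard (k - s) Sᶜ)).card := by
    refine Finset.card_nbij' (i := fun T => (T ∩ S, T \ S))
      (j := fun p => p.1 ∪ p.2) ?_ ?_ ?_ ?_
    · intro T hT
      simp only [Finset.mem_coe, Finset.mem_filter, mem_powersetCard] at hT
      obtain ⟨⟨-, hcard⟩, hints⟩ := hT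
      simp only [Finset.mem_coe, Finset.mem_product, mem_powersetCard]
      refine ⟨⟨Finset.inter_subset_right, hints⟩, ?_, ?_⟩
      · intro a ha
        simp only [Finset.mem_sdiff] at ha
        simpa using ha.2
      · have := Finset.card_inter_add_card_sdiff T S
        omega
    · intro p hp
      simp only [Finset.mem_coe, Finset.mem_product, mem_powersetCard] at hp
      obtain ⟨⟨hU, hUcard⟩, hV, hVcard⟩ := hp
      have hdisj : Disjoint p.1 p.2 := by
        refine Finset.disjoint_left.mpr fun a haU haV => ?_
        have := hV haV
        simp only [Finset.mem_compl] at this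
        exact this (hU haU)
      simp only [Finset.mem_coe, Finset.mem_filter, mem_powersetCard]
      have hinter : (p.1 ∪ p.2) ∩ S = p.1 := by
        ext a
        simp only [Finset.mem_inter, Finset.mem_union]
        constructor
        · rintro ⟨h1 | h2, haS⟩
          · exact h1
          · exact absurd haS (by simpa using hV h2)
        · intro h; exact ⟨Or.inl h, hU h⟩
      refine ⟨⟨Finset.subset_univ _, ?_⟩, by rw [hinter, hUcard]⟩
      rw [Finset.card_union_of_disjoint hdisj, hUcard, hVcard]
      omega
    · intro T hT
      simp only
      rw [Finset.union_comm]
      exact Finset.sdiff_union_inter T S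
    · intro p hp
      simp only [Finset.mem_coe, Finset.mem_product, mem_powersetCard] at hp
      obtain ⟨⟨hU, hUcard⟩, hV, hVcard⟩ := hp
      have hinter : (p.1 ∪ p.2) ∩ S = p.1 := by
        ext a
        simp only [Finset.mem_inter, Finset.mem_union]
        constructor
        · rintro ⟨h1 | h2, haS⟩
          · exact h1
          · exact absurd haS (by simpa using hV h2)
        · intro h; exact ⟨Or.inl h, hU h⟩
      have hsd : (p.1 ∪ p.2) \ S = p.2 := by
        ext a
        simp only [Finset.mem_sdiff, Finset.mem_union]
        constructor
        · rintro ⟨h1 | h2, haS⟩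
          · exact absurd (hU h1) haS
          · exact h2
        · intro h
          exact ⟨Or.inr h, by simpa using hV h⟩
      simp only
      rw [hinter, hsd]
  rw [key, Finset.card_product, Finset.card_powersetCard, Finset.card_powersetCard,
    Finset.card_compl, Fintype.card_fin]

lemma dot_eq_card {n : ℕ} (r x : Fin n → ZMod 2) :
    ∑ j, r j * x j = (((supp r ∩ supp x).card : ℕ) : ZMod 2) := by
  have h : ∀ j, r j * x j = if j ∈ supp r ∩ supp x then (1 : ZMod 2) else 0 := by
    intro j
    have h' : ∀ c : ZMod 2, c = 0 ∨ c = 1 := by decide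
    rcases h' (r j) with h1 | h1 <;> rcases h' (x j) with h2 | h2 <;>
      simp [supp, h1, h2]
  simp_rw [h]
  rw [Finset.sum_ite_mem, Finset.univ_inter, Finset.sum_const, nsmul_eq_mul, mul_one]

lemma sum_rows {n k : ℕ} (x : Fin n → ZMod 2) :
    ∑ r ∈ Finset.univ.filter (fun r : Fin n → ZMod 2 => (supp r).card = k),
      (-1 : ℝ) ^ ((supp r ∩ supp x).card) = (omegaW n (supp x).card k : ℝ) := by
  rw [sum_supp_eq (f := fun T => (-1:ℝ) ^ ((T ∩ supp x).card))]
  have hmap : ∀ T ∈ powersetCard k (Finset.univ : Finset (Fin n)),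
      (T ∩ supp x).card ∈ Finset.range (k + 1) := by
    intro T hT
    simp only [mem_powersetCard] at hT
    rw [Finset.mem_range]
    have h1 := Finset.card_le_card (Finset.inter_subset_left (s₁ := T) (s₂ := supp x))
    omega
  rw [← Finset.sum_fiberwise_of_maps_to' hmap (fun s => (-1:ℝ) ^ s)]
  rw [omegaW]
  push_cast
  refine Finset.sum_congr rfl fun s hs => ?_
  rw [Finset.mem_range] at hs
  rw [Finset.sum_const, card_inter_fiber (supp x) k s (by omega), nsmul_eq_mul]
  push_cast
  ring

lemma Mset_eq (L n k : ℕ) :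
    Mset L n k = Fintype.piFinset
      (fun _ : Fin L => Finset.univ.filter fun r : Fin n → ZMod 2 => (supp r).card = k) := by
  ext A
  simp only [Mset, Finset.mem_filter, Finset.mem_univ, true_and]
  constructor
  · intro h
    refine Fintype.mem_piFinset.mpr ?_
    intro i
    simp only [Finset.mem_filter, Finset.mem_univ, true_and, supp]
    exact Finset.mem_filter.mpr ⟨Finset.mem_univ _, h i⟩
  · intro h i
    have := Fintype.mem_piFinset.mp h i
    simpa [supp] using this

lemma sum_rot {α β γ M : Type*} [AddCommMonoid M] [Fintype α] [Fintype β]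
    (s : Finset γ) (F : α → γ → β → M) :
    ∑ u : α, ∑ A ∈ s, ∑ x : β, F u A x = ∑ x : β, ∑ u : α, ∑ A ∈ s, F u A x := by
  have h1 : ∑ u : α, ∑ A ∈ s, ∑ x : β, F u A x
      = ∑ u : α, ∑ x : β, ∑ A ∈ s, F u A x :=
    Finset.sum_congr rfl fun u _ => Finset.sum_comm
  rw [h1]
  exact Finset.sum_comm


set_option maxHeartbeats 1600000 in
/-- `E_{L,k}(Y) = 2^{−n} ∑_{m=0}^{n} C(n,m) (1 + ω_{n,m,k}/C(n,k))^L`. -/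
theorem EY_eq_sum (n L k : ℕ) (hk : 1 ≤ k) (hkn : k ≤ n) :
    EY n L k = (2 : ℝ) ^ (-(n : ℤ)) * ∑ m ∈ Finset.range (n + 1),
      (n.choose m : ℝ) * (1 + (omegaW n m k : ℝ) / (n.choose k : ℝ)) ^ L := by
  classical
  have hC : (0:ℝ) < (n.choose k : ℝ) := by exact_mod_cast Nat.choose_pos hkn
  have hY : ∀ A : Matrix (Fin L) (Fin n) (ZMod 2), (Ycount A : ℝ)
      = ∑ u : Fin L → ZMod 2, (if Matrix.vecMul u A = 0 then (1:ℝ) else 0) := by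
    intro A
    rw [Ycount, Nat.card_eq_fintype_card, Fintype.card_subtype, Finset.card_filter]
    push_cast
    rfl
  have hsplit : ∀ (u : Fin L → ZMod 2) (A : Matrix (Fin L) (Fin n) (ZMod 2))
      (x : Fin n → ZMod 2),
      sgn (∑ j, Matrix.vecMul u A j * x j) = ∏ i, sgn (u i * ∑ j, A i j * x j) := by
    intro u A x
    have hv : ∀ j, Matrix.vecMul u A j = ∑ i, u i * A i j := by
      intro j; simp [Matrix.vecMul, dotProduct]
    have h1 : ∑ j, Matrix.vecMul u A j * x j = ∑ i, u i * ∑ j, A i j * x j := by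
      simp_rw [hv, Finset.sum_mul, mul_assoc, Finset.mul_sum]
      rw [Finset.sum_comm]
    rw [h1, sgn_sum]
  have key : ∑ A ∈ Mset L n k, (Ycount A : ℝ)
      = ((2:ℝ)^n)⁻¹ * ∑ m ∈ Finset.range (n+1),
          (n.choose m : ℝ) * ((n.choose k : ℝ) + (omegaW n m k : ℝ)) ^ L := by
    calc ∑ A ∈ Mset L n k, (Ycount A : ℝ)
        = ∑ A ∈ Mset L n k, ∑ u : Fin L → ZMod 2,
            (if Matrix.vecMul u A = 0 then (1:ℝ) else 0) :=
          Finset.sum_congr rfl fun A _ => hY A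
      _ = ∑ u : Fin L → ZMod 2, ∑ A ∈ Mset L n k,
            (if Matrix.vecMul u A = 0 then (1:ℝ) else 0) := Finset.sum_comm
      _ = ∑ u : Fin L → ZMod 2, ∑ A ∈ Mset L n k, ((2:ℝ)^n)⁻¹ *
            ∑ x : Fin n → ZMod 2, sgn (∑ j, Matrix.vecMul u A j * x j) := by
          refine Finset.sum_congr rfl fun u _ => Finset.sum_congr rfl fun A _ => ?_
          rw [sum_sgn_dot]
          by_cases h : Matrix.vecMul u A = 0
          · rw [if_pos h, if_pos h]
            rw [mul_comm, mul_inv_cancel₀ (by positivity)]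
          · rw [if_neg h, if_neg h, mul_zero]
      _ = ((2:ℝ)^n)⁻¹ * ∑ u : Fin L → ZMod 2, ∑ A ∈ Mset L n k,
            ∑ x : Fin n → ZMod 2, sgn (∑ j, Matrix.vecMul u A j * x j) := by
          simp_rw [← Finset.mul_sum]
      _ = ((2:ℝ)^n)⁻¹ * ∑ x : Fin n → ZMod 2, ∑ u : Fin L → ZMod 2,
            ∑ A ∈ Mset L n k, sgn (∑ j, Matrix.vecMul u A j * x j) := by
          congr 1
          apply sum_rot
      _ = ((2:ℝ)^n)⁻¹ * ∑ x : Fin n → ZMod 2, ∑ u : Fin L → ZMod 2,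
            ∏ i, (if u i = 0 then ((n.choose k : ℕ) : ℝ)
              else (omegaW n (supp x).card k : ℝ)) := by
          congr 1
          refine Finset.sum_congr rfl fun x _ => Finset.sum_congr rfl fun u _ => ?_
          calc ∑ A ∈ Mset L n k, sgn (∑ j, Matrix.vecMul u A j * x j)
              = ∑ A ∈ Mset L n k, ∏ i, sgn (u i * ∑ j, A i j * x j) :=
                Finset.sum_congr rfl fun A _ => hsplit u A x
            _ = ∏ i, ∑ r ∈ Finset.univ.filter
                  (fun r : Fin n → ZMod 2 => (supp r).card = k),
                  sgn (u i * ∑ j, r j * x j) := by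
                rw [Mset_eq]
                exact Finset.sum_prod_piFinset
                  (Finset.univ.filter fun r : Fin n → ZMod 2 => (supp r).card = k)
                  (fun i r => sgn (u i * ∑ j, r j * x j))
            _ = ∏ i, (if u i = 0 then ((n.choose k : ℕ) : ℝ)
                  else (omegaW n (supp x).card k : ℝ)) := by
                refine Finset.prod_congr rfl fun i _ => ?_
                have h' : u i = 0 ∨ u i = 1 := by
                  have : ∀ c : ZMod 2, c = 0 ∨ c = 1 := by decide
                  exact this _
                rcases h' with h1 | h1 <;> rw [h1]
                · simp only [zero_mul, sgn_zero]
                  rw [Finset.sum_const, card_weight, nsmul_eq_mul, mul_one, if_true]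
                · rw [if_neg (by decide)]
                  simp_rw [one_mul, dot_eq_card, sgn_natCast]
                  exact sum_rows x
      _ = ((2:ℝ)^n)⁻¹ * ∑ x : Fin n → ZMod 2,
            (((n.choose k : ℕ) : ℝ) + (omegaW n (supp x).card k : ℝ)) ^ L := by
          congr 1
          refine Finset.sum_congr rfl fun x _ => ?_
          rw [← Fintype.piFinset_univ,
            Finset.sum_prod_piFinset (Finset.univ : Finset (ZMod 2))
              (fun _ c => if c = 0 then ((n.choose k : ℕ) : ℝ)
                else (omegaW n (supp x).card k : ℝ))]
          have huniv : (Finset.univ : Finset (ZMod 2)) = {0, 1} := by decide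
          rw [Finset.prod_congr rfl (fun i _ => by
            rw [huniv, Finset.sum_insert (by decide), Finset.sum_singleton,
              if_pos rfl, if_neg (by decide)])]
          rw [Finset.prod_const, Finset.card_univ, Fintype.card_fin]
      _ = ((2:ℝ)^n)⁻¹ * ∑ m ∈ Finset.range (n+1),
            (n.choose m : ℝ) * ((n.choose k : ℝ) + (omegaW n m k : ℝ)) ^ L := by
          congr 1
          have hw : ∀ x : Fin n → ZMod 2, (supp x).card ∈ Finset.range (n+1) := by
            intro x
            rw [Finset.mem_range]
            have h1 := Finset.card_le_card (Finset.subset_univ (supp x))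
            rw [Finset.card_univ, Fintype.card_fin] at h1
            omega
          rw [← Finset.sum_fiberwise_of_maps_to' (fun x _ => hw x)
            (fun m => (((n.choose k : ℕ) : ℝ) + (omegaW n m k : ℝ)) ^ L)]
          refine Finset.sum_congr rfl fun m _ => ?_
          rw [Finset.sum_const, card_weight, nsmul_eq_mul]
  rw [EY, key, zpow_neg, zpow_natCast]
  have hterm : ∀ m, (n.choose m : ℝ) * (1 + (omegaW n m k : ℝ)/(n.choose k:ℝ))^L
      = (n.choose m : ℝ) * ((n.choose k:ℝ) + (omegaW n m k:ℝ))^L / ((n.choose k:ℝ))^L := by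
    intro m
    rw [show (1 + (omegaW n m k : ℝ)/(n.choose k:ℝ))
        = ((n.choose k:ℝ) + (omegaW n m k:ℝ))/(n.choose k:ℝ) by field_simp, div_pow]
    ring
  simp_rw [hterm]
  rw [← Finset.sum_div, mul_div_assoc]
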